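/- Let d₁, d₂, d₃, d₄ ∈ ℂ satisfy exp(d₁) = exp(d₂) and exp(d₃) = exp(d₄), and set c₁ := 8πi/3, c₂ := −2πi/3. Define f, g : ℂ² → ℂ by f(z₁, z₂) := (1/(6√2))·(−(3 − √3)·exp(z₁ + z₂ + d₂) + (3 + √3)·exp(z₁ − 2z₂ + d₄)) and g(z₁, z₂) := (1/(6√2))·((3 + √3)·exp(z₁ + z₂ + d₁) − (3 − √3)·exp(z₁ − 2z₂ + d₃)). Then for all (z₁, z₂) ∈ ℂ²: (∂f/∂z₁)(z₁, z₂)² + 4·(∂f/∂z₁)(z₁, z₂)·g(z₁ + c₁, z₂ + c₂) + g(z₁ + c₁, z₂ + c₂)² = exp(2z₁ − z₂ + d₁ + d₃) and (∂g/∂z₁)(z₁, z₂)² + 4·(∂g/∂z₁)(z₁, z₂)·f(z₁ + c₁, z₂ + c₂) + f(z₁ + c₁, z₂ + c₂)² = exp(2z₁ − z₂ + d₂ + d₄). -/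

import Mathlib

theorem stmt_17 (d₁ d₂ d₃ d₄ c₁ c₂ : ℂ)
    (hd12 : Complex.exp d₁ = Complex.exp d₂) (hd34 : Complex.exp d₃ = Complex.exp d₄)
    (hc₁ : c₁ = 8 * Real.pi * Complex.I / 3) (hc₂ : c₂ = -(2 * Real.pi * Complex.I) / 3)
    (f g : ℂ → ℂ → ℂ)
    (hf : ∀ z₁ z₂, f z₁ z₂ = (1 / (6 * (Real.sqrt 2 : ℂ)))
      * (-(3 - (Real.sqrt 3 : ℂ)) * Complex.exp (z₁ + z₂ + d₂)
        + (3 + (Real.sqrt 3 : ℂ)) * Complex.exp (z₁ - 2 * z₂ + d₄)))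
    (hg : ∀ z₁ z₂, g z₁ z₂ = (1 / (6 * (Real.sqrt 2 : ℂ)))
      * ((3 + (Real.sqrt 3 : ℂ)) * Complex.exp (z₁ + z₂ + d₁)
        - (3 - (Real.sqrt 3 : ℂ)) * Complex.exp (z₁ - 2 * z₂ + d₃))) :
    ∀ z₁ z₂ : ℂ,
      (deriv (fun t => f t z₂) z₁) ^ 2
          + 4 * (deriv (fun t => f t z₂) z₁) * g (z₁ + c₁) (z₂ + c₂)
          + g (z₁ + c₁) (z₂ + c₂) ^ 2 = Complex.exp (2 * z₁ - z₂ + d₁ + d₃) ∧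
      (deriv (fun t => g t z₂) z₁) ^ 2
          + 4 * (deriv (fun t => g t z₂) z₁) * f (z₁ + c₁) (z₂ + c₂)
          + f (z₁ + c₁) (z₂ + c₂) ^ 2 = Complex.exp (2 * z₁ - z₂ + d₂ + d₄) := by
  intro z₁ z₂
  set s2 : ℂ := (Real.sqrt 2 : ℂ) with hs2def
  set s3 : ℂ := (Real.sqrt 3 : ℂ) with hs3def
  have hu2 : (1 / (6 * s2)) ^ 2 = 1 / 72 := by
    have h2 : s2 ^ 2 = 2 := by
      rw [hs2def, ← Complex.ofReal_pow, Real.sq_sqrt (by norm_num : (0:ℝ) ≤ 2)]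
      norm_num
    rw [div_pow, mul_pow, h2]
    norm_num
  have hs3 : s3 ^ 2 = 3 := by
    rw [hs3def, ← Complex.ofReal_pow, Real.sq_sqrt (by norm_num : (0:ℝ) ≤ 3)]
    norm_num
  -- exp shift lemmas
  have h2pi : Complex.exp (2 * Real.pi * Complex.I) = 1 := Complex.exp_two_pi_mul_I
  have shift1 : ∀ d : ℂ, Complex.exp (z₁ + c₁ + (z₂ + c₂) + d) = Complex.exp (z₁ + z₂ + d) := by
    intro d
    rw [show z₁ + c₁ + (z₂ + c₂) + d = (z₁ + z₂ + d) + 2 * Real.pi * Complex.I by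
      rw [hc₁, hc₂]; ring, Complex.exp_add, h2pi, mul_one]
  have shift2 : ∀ d : ℂ, Complex.exp (z₁ + c₁ - 2 * (z₂ + c₂) + d) = Complex.exp (z₁ - 2 * z₂ + d) := by
    intro d
    rw [show z₁ + c₁ - 2 * (z₂ + c₂) + d
        = (z₁ - 2 * z₂ + d) + 2 * Real.pi * Complex.I + 2 * Real.pi * Complex.I by
      rw [hc₁, hc₂]; ring, Complex.exp_add, Complex.exp_add, h2pi, mul_one, mul_one]
  -- abbreviations
  set P : ℂ := Complex.exp (z₁ + z₂) with hP
  set Q : ℂ := Complex.exp (z₁ - 2 * z₂) with hQ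
  set e₂ : ℂ := Complex.exp d₂ with he₂
  set e₄ : ℂ := Complex.exp d₄ with he₄
  have hsplit : ∀ d : ℂ, Complex.exp (z₁ + z₂ + d) = P * Complex.exp d := fun d =>
    Complex.exp_add _ _
  have hsplit2 : ∀ d : ℂ, Complex.exp (z₁ - 2 * z₂ + d) = Q * Complex.exp d := fun d =>
    Complex.exp_add _ _
  -- derivatives
  have hDf : deriv (fun t => f t z₂) z₁
      = (1 / (6 * s2)) * (-(3 - s3) * (P * e₂) + (3 + s3) * (Q * e₄)) := by
    have e1 : HasDerivAt (fun t : ℂ => Complex.exp (t + z₂ + d₂))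
        (Complex.exp (z₁ + z₂ + d₂)) z₁ := by
      have h : HasDerivAt (fun t : ℂ => t + z₂ + d₂) 1 z₁ :=
        ((hasDerivAt_id z₁).add_const z₂).add_const d₂
      simpa using h.cexp
    have e2 : HasDerivAt (fun t : ℂ => Complex.exp (t - 2 * z₂ + d₄))
        (Complex.exp (z₁ - 2 * z₂ + d₄)) z₁ := by
      have h : HasDerivAt (fun t : ℂ => t - 2 * z₂ + d₄) 1 z₁ :=
        ((hasDerivAt_id z₁).sub_const (2 * z₂)).add_const d₄
      simpa using h.cexp
    have hD : HasDerivAt (fun t => f t z₂)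
        ((1 / (6 * s2)) * (-(3 - s3) * Complex.exp (z₁ + z₂ + d₂)
          + (3 + s3) * Complex.exp (z₁ - 2 * z₂ + d₄))) z₁ := by
      have := ((e1.const_mul (-(3 - s3))).add (e2.const_mul (3 + s3))).const_mul (1 / (6 * s2))
      exact this.congr_of_eventuallyEq (Filter.Eventually.of_forall fun t => hf t z₂)
    rw [hD.deriv, hsplit, hsplit2]
  have hDg : deriv (fun t => g t z₂) z₁
      = (1 / (6 * s2)) * ((3 + s3) * (P * e₂) - (3 - s3) * (Q * e₄)) := by
    have e1 : HasDerivAt (fun t : ℂ => Complex.exp (t + z₂ + d₁))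
        (Complex.exp (z₁ + z₂ + d₁)) z₁ := by
      have h : HasDerivAt (fun t : ℂ => t + z₂ + d₁) 1 z₁ :=
        ((hasDerivAt_id z₁).add_const z₂).add_const d₁
      simpa using h.cexp
    have e2 : HasDerivAt (fun t : ℂ => Complex.exp (t - 2 * z₂ + d₃))
        (Complex.exp (z₁ - 2 * z₂ + d₃)) z₁ := by
      have h : HasDerivAt (fun t : ℂ => t - 2 * z₂ + d₃) 1 z₁ :=
        ((hasDerivAt_id z₁).sub_const (2 * z₂)).add_const d₃
      simpa using h.cexp
    have hD : HasDerivAt (fun t => g t z₂)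
        ((1 / (6 * s2)) * ((3 + s3) * Complex.exp (z₁ + z₂ + d₁)
          - (3 - s3) * Complex.exp (z₁ - 2 * z₂ + d₃))) z₁ := by
      have := ((e1.const_mul (3 + s3)).sub (e2.const_mul (3 - s3))).const_mul (1 / (6 * s2))
      exact this.congr_of_eventuallyEq (Filter.Eventually.of_forall fun t => hg t z₂)
    rw [hD.deriv, hsplit, hsplit2, hd12, hd34]
  have hgc : g (z₁ + c₁) (z₂ + c₂)
      = (1 / (6 * s2)) * ((3 + s3) * (P * e₂) - (3 - s3) * (Q * e₄)) := by
    rw [hg, shift1, shift2, hsplit, hsplit2, hd12, hd34]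
  have hfc : f (z₁ + c₁) (z₂ + c₂)
      = (1 / (6 * s2)) * (-(3 - s3) * (P * e₂) + (3 + s3) * (Q * e₄)) := by
    rw [hf, shift1, shift2, hsplit, hsplit2]
  have hR1 : Complex.exp (2 * z₁ - z₂ + d₁ + d₃) = P * Q * (e₂ * e₄) := by
    rw [show 2 * z₁ - z₂ + d₁ + d₃ = (z₁ + z₂) + ((z₁ - 2 * z₂) + (d₁ + d₃)) by ring,
      Complex.exp_add (z₁ + z₂), Complex.exp_add (z₁ - 2 * z₂), Complex.exp_add d₁ d₃,
      hd12, hd34, ← hP, ← hQ]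
    ring
  have hR2 : Complex.exp (2 * z₁ - z₂ + d₂ + d₄) = P * Q * (e₂ * e₄) := by
    rw [show 2 * z₁ - z₂ + d₂ + d₄ = (z₁ + z₂) + ((z₁ - 2 * z₂) + (d₂ + d₄)) by ring,
      Complex.exp_add (z₁ + z₂), Complex.exp_add (z₁ - 2 * z₂), Complex.exp_add d₂ d₄,
      ← hP, ← hQ]
    simp only [he₂, he₄]
    ring
  rw [hDf, hDg, hgc, hfc, hR1, hR2]
  constructor
  · linear_combination
      (((3 - s3) * (P * e₂) - (3 + s3) * (Q * e₄)) ^ 2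
        + 4 * (-(3 - s3) * (P * e₂) + (3 + s3) * (Q * e₄))
          * ((3 + s3) * (P * e₂) - (3 - s3) * (Q * e₄))
        + ((3 + s3) * (P * e₂) - (3 - s3) * (Q * e₄)) ^ 2) * hu2
      + ((P * e₂ + Q * e₄) ^ 2 / 12) * hs3
  · linear_combination
      (((3 - s3) * (P * e₂) - (3 + s3) * (Q * e₄)) ^ 2
        + 4 * (-(3 - s3) * (P * e₂) + (3 + s3) * (Q * e₄))
          * ((3 + s3) * (P * e₂) - (3 - s3) * (Q * e₄))
        + ((3 + s3) * (P * e₂) - (3 - s3) * (Q * e₄)) ^ 2) * hu2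
      + ((P * e₂ + Q * e₄) ^ 2 / 12) * hs3
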